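/- For every ℓ ≥ 1, every finite type α, and every word ω : Fin ℓ → α, the number of bridges of G_ω (counted as ordered pairs (a, b) ∈ α × α) equals the number of disjoint splits of ω (indices j with 1 ≤ j < ℓ such that the prefix and suffix alphabets at j are disjoint). -/

import Mathlib

/-- The edge relation of the word-graph of `ω`: ordered pairs of distinct adjacent letters. -/
def WordEdge {ℓ : ℕ} {α : Type*} (ω : Fin ℓ → α) (a b : α) : Prop :=
  a ≠ b ∧ ∃ i : ℕ, ∃ h : i + 1 < ℓ, ω ⟨i, Nat.lt_of_succ_lt h⟩ = a ∧ ω ⟨i + 1, h⟩ = b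

/-- `(a, b)` is a bridge of the word-graph of `ω`: a unidirectional edge whose removal
disconnects (in the weak sense) the word-graph on the alphabet `Set.range ω`. -/
def IsBridge {ℓ : ℕ} {α : Type*} (ω : Fin ℓ → α) (a b : α) : Prop :=
  WordEdge ω a b ∧ ¬ WordEdge ω b a ∧
    ∃ c ∈ Set.range ω, ∃ d ∈ Set.range ω,
      ¬ Relation.ReflTransGen
        (fun x y => (WordEdge ω x y ∧ ¬(x = a ∧ y = b)) ∨
                    (WordEdge ω y x ∧ ¬(y = a ∧ x = b))) c d

/-- `j` is a disjoint split of `ω`: `1 ≤ j < ℓ` and the prefix alphabet and suffix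
alphabet at `j` are disjoint. -/
def DisjointSplit {ℓ : ℕ} {α : Type*} (ω : Fin ℓ → α) (j : ℕ) : Prop :=
  1 ≤ j ∧ j < ℓ ∧
    Disjoint {a | ∃ i : Fin ℓ, (i : ℕ) < j ∧ ω i = a}
             {a | ∃ i : Fin ℓ, j ≤ (i : ℕ) ∧ ω i = a}

namespace CardBridgeAux

variable {ℓ : ℕ} {α : Type*}

/-- The residual relation: edges of the word graph minus the edge `(a,b)`, symmetrized. -/
def Rres (ω : Fin ℓ → α) (a b x y : α) : Prop :=
  (WordEdge ω x y ∧ ¬(x = a ∧ y = b)) ∨ (WordEdge ω y x ∧ ¬(y = a ∧ x = b))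

lemma Rres_symm (ω : Fin ℓ → α) (a b : α) : Symmetric (Rres ω a b) :=
  fun _ _ h => Or.symm h

lemma rstg_symm (ω : Fin ℓ → α) (a b : α) :
    Symmetric (Relation.ReflTransGen (Rres ω a b)) :=
  have : Std.Symm (Rres ω a b) := ⟨Rres_symm ω a b⟩
  fun x y h => (Relation.ReflTransGen.stdSymm (r := Rres ω a b)).symm x y h

lemma step (ω : Fin ℓ → α) (a b : α) {m : ℕ} (hm : m + 1 < ℓ)
    (hnc : ¬(ω ⟨m, Nat.lt_of_succ_lt hm⟩ = a ∧ ω ⟨m + 1, hm⟩ = b)) :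
    Relation.ReflTransGen (Rres ω a b) (ω ⟨m, Nat.lt_of_succ_lt hm⟩) (ω ⟨m + 1, hm⟩) := by
  by_cases he : ω ⟨m, Nat.lt_of_succ_lt hm⟩ = ω ⟨m + 1, hm⟩
  · rw [he]
  · exact Relation.ReflTransGen.single (Or.inl ⟨⟨he, m, hm, rfl, rfl⟩, hnc⟩)

lemma chain (ω : Fin ℓ → α) (a b : α) :
    ∀ (n : ℕ) {k k' : ℕ} (hn : k' = k + n) (hk' : k' < ℓ)
      (h : ∀ m (hm : m + 1 < ℓ), k ≤ m → m < k' →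
        ¬(ω ⟨m, Nat.lt_of_succ_lt hm⟩ = a ∧ ω ⟨m + 1, hm⟩ = b)),
      Relation.ReflTransGen (Rres ω a b) (ω ⟨k, by omega⟩) (ω ⟨k', hk'⟩) := by
  intro n
  induction n with
  | zero =>
    intro k k' hn hk' h
    have : k = k' := by omega
    subst this
    exact Relation.ReflTransGen.refl
  | succ n ih =>
    intro k k' hn hk' h
    have hk1 : k + 1 < ℓ := by omega
    have h1 : Relation.ReflTransGen (Rres ω a b) (ω ⟨k, by omega⟩) (ω ⟨k + 1, hk1⟩) :=
      step ω a b hk1 (h k hk1 le_rfl (by omega))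
    have h2 : Relation.ReflTransGen (Rres ω a b) (ω ⟨k + 1, by omega⟩) (ω ⟨k', hk'⟩) :=
      ih (k := k + 1) (by omega) hk' (fun m hm h1 h2 => h m hm (by omega) h2)
    exact h1.trans h2

/-- A disjoint split yields a bridge. -/
lemma split_bridge (ω : Fin ℓ → α) {j : ℕ} (hs : DisjointSplit ω j) :
    IsBridge ω (ω ⟨j - 1, lt_of_le_of_lt (Nat.sub_le j 1) hs.2.1⟩) (ω ⟨j, hs.2.1⟩) := by
  obtain ⟨hj1, hjℓ, hdisj⟩ := hs
  set a := ω ⟨j - 1, lt_of_le_of_lt (Nat.sub_le j 1) (by exact hjℓ)⟩ with ha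
  set b := ω ⟨j, hjℓ⟩ with hb
  have haP : a ∈ {x | ∃ i : Fin ℓ, (i : ℕ) < j ∧ ω i = x} := ⟨⟨j - 1, by omega⟩, by simp only [Fin.val_mk]; omega, rfl⟩
  have hbS : b ∈ {x | ∃ i : Fin ℓ, j ≤ (i : ℕ) ∧ ω i = x} := ⟨⟨j, hjℓ⟩, by simp only [Fin.val_mk]; omega, rfl⟩
  have hne : a ≠ b := by
    intro hab
    exact Set.disjoint_left.mp hdisj haP (hab ▸ hbS)
  have hE : WordEdge ω a b := by
    refine ⟨hne, j - 1, by omega, rfl, ?_⟩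
    have : (⟨j - 1 + 1, by omega⟩ : Fin ℓ) = ⟨j, hjℓ⟩ := Fin.ext (by simp; omega)
    rw [this]
  have hNE : ¬ WordEdge ω b a := by
    rintro ⟨-, i, hi, hib, hia⟩
    rcases lt_trichotomy (i + 1) j with hlt | heq | hgt
    · -- b appears in the prefix
      exact Set.disjoint_left.mp hdisj ⟨⟨i, by omega⟩, by simp only [Fin.val_mk]; omega, hib⟩ hbS
    · -- ω (j-1) = b, but also = a
      have : (⟨i, Nat.lt_of_succ_lt hi⟩ : Fin ℓ) = ⟨j - 1, by omega⟩ := Fin.ext (by simp; omega)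
      rw [this] at hib
      exact hne (hib ▸ rfl)
    · -- a appears in the suffix
      exact Set.disjoint_left.mp hdisj haP ⟨⟨i + 1, hi⟩, by simp only [Fin.val_mk]; omega, hia⟩
  refine ⟨hE, hNE, a, ⟨⟨j - 1, by omega⟩, rfl⟩, b, ⟨⟨j, hjℓ⟩, rfl⟩, ?_⟩
  intro hpath
  -- everything reachable from a stays in the prefix alphabet
  have key : ∀ x, Relation.ReflTransGen (Rres ω a b) a x →
      x ∈ {t | ∃ i : Fin ℓ, (i : ℕ) < j ∧ ω i = t} := by
    intro x hx
    induction hx with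
    | refl => exact haP
    | tail hxy hstep ih =>
      rename_i y z
      rcases hstep with ⟨⟨-, i, hi, hiy, hiz⟩, hnc⟩ | ⟨⟨-, i, hi, hiz, hiy⟩, hnc⟩
      · rcases lt_trichotomy (i + 1) j with hlt | heq | hgt
        · exact ⟨⟨i + 1, hi⟩, by simp only [Fin.val_mk]; omega, hiz⟩
        · exfalso
          apply hnc
          have h1 : (⟨i, Nat.lt_of_succ_lt hi⟩ : Fin ℓ) = ⟨j - 1, by omega⟩ :=
            Fin.ext (by simp; omega)
          have h2 : (⟨i + 1, hi⟩ : Fin ℓ) = ⟨j, hjℓ⟩ := Fin.ext (by simpa using heq)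
          constructor
          · rw [← hiy, h1]
          · rw [← hiz, h2]
        · exfalso
          exact Set.disjoint_left.mp hdisj ih ⟨⟨i, Nat.lt_of_succ_lt hi⟩, by simp only [Fin.val_mk]; omega, hiy⟩
      · rcases lt_or_ge (i + 1) j with hlt | hge
        · exact ⟨⟨i, Nat.lt_of_succ_lt hi⟩, by simp only [Fin.val_mk]; omega, hiz⟩
        · exfalso
          exact Set.disjoint_left.mp hdisj ih ⟨⟨i + 1, hi⟩, by simp only [Fin.val_mk]; omega, hiy⟩
  exact Set.disjoint_left.mp hdisj (key b hpath) hbS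

/-- A bridge yields a disjoint split. -/
lemma bridge_split (ω : Fin ℓ → α) {a b : α} (hbr : IsBridge ω a b) :
    ∃ j : ℕ, ∃ hs : DisjointSplit ω j, ω ⟨j - 1, lt_of_le_of_lt (Nat.sub_le j 1) hs.2.1⟩ = a ∧ ω ⟨j, hs.2.1⟩ = b := by
  obtain ⟨⟨hne, i0', hi0', hwa, hwb⟩, hNE, c, hc, d, hd, hncd⟩ := hbr
  -- no residual path from a to b
  have hnab : ¬ Relation.ReflTransGen (Rres ω a b) a b := by
    intro hab
    apply hncd
    have all : ∀ k (hk : k < ℓ),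
        Relation.ReflTransGen (Rres ω a b) (ω ⟨0, by omega⟩) (ω ⟨k, hk⟩) := by
      intro k
      induction k with
      | zero => intro hk; exact Relation.ReflTransGen.refl
      | succ k ih =>
        intro hk
        have hk' : k < ℓ := by omega
        refine (ih hk').trans ?_
        by_cases hc : ω ⟨k, hk'⟩ = a ∧ ω ⟨k + 1, hk⟩ = b
        · rw [hc.1, hc.2]; exact hab
        · exact step ω a b hk hc
    obtain ⟨kc, rfl⟩ := hc
    obtain ⟨kd, rfl⟩ := hd
    exact ((rstg_symm ω a b (all kc kc.2)).trans (all kd kd.2))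
  -- crossings
  have hT : ∃ i, ∃ h : i + 1 < ℓ, ω ⟨i, Nat.lt_of_succ_lt h⟩ = a ∧ ω ⟨i + 1, h⟩ = b :=
    ⟨i0', hi0', hwa, hwb⟩
  classical
  obtain ⟨h0, ha0, hb0⟩ := Nat.find_spec hT
  set i0 := Nat.find hT with hi0def
  -- uniqueness of the crossing
  have huniq : ∀ k (hk : k + 1 < ℓ), ω ⟨k, Nat.lt_of_succ_lt hk⟩ = a → ω ⟨k + 1, hk⟩ = b →
      k = i0 := by
    intro k hk hka hkb
    by_contra hne'
    have hk0 : i0 < k := lt_of_le_of_ne (Nat.find_le ⟨hk, hka, hkb⟩) (Ne.symm hne')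
    -- minimal crossing strictly above i0
    have hT2 : ∃ m, (∃ h : m + 1 < ℓ, ω ⟨m, Nat.lt_of_succ_lt h⟩ = a ∧ ω ⟨m + 1, h⟩ = b)
        ∧ i0 < m := ⟨k, ⟨hk, hka, hkb⟩, hk0⟩
    set k1 := Nat.find hT2 with hk1def
    obtain ⟨⟨hk1ℓ, hk1a, hk1b⟩, hk1gt⟩ := Nat.find_spec hT2
    have hchain : Relation.ReflTransGen (Rres ω a b) (ω ⟨i0 + 1, by omega⟩)
        (ω ⟨k1, Nat.lt_of_succ_lt hk1ℓ⟩) := by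
      refine chain ω a b (k1 - (i0 + 1)) (k := i0 + 1) (k' := k1) (by omega) (by omega) ?_
      intro m hm hm1 hm2 ⟨hma, hmb⟩
      have : k1 ≤ m := Nat.find_le ⟨⟨hm, hma, hmb⟩, by omega⟩
      omega
    rw [hb0, hk1a] at hchain
    exact hnab (rstg_symm ω a b hchain)
  refine ⟨i0 + 1, ⟨by omega, by omega, ?_⟩, by simpa using ha0, by simpa using hb0⟩
  rw [Set.disjoint_left]
  rintro x ⟨⟨p, hp⟩, hplt, rfl⟩ ⟨⟨q, hq⟩, hqge, hqx⟩
  simp only at hplt hqge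
  -- ω p ~ a
  have hnc1 : ∀ m (hm : m + 1 < ℓ), p ≤ m → m < i0 →
      ¬(ω ⟨m, Nat.lt_of_succ_lt hm⟩ = a ∧ ω ⟨m + 1, hm⟩ = b) := by
    intro m hm hm1 hm2 ⟨hma, hmb⟩
    have : i0 ≤ m := Nat.find_le ⟨hm, hma, hmb⟩
    omega
  have hpa : Relation.ReflTransGen (Rres ω a b) (ω ⟨p, hp⟩) a := by
    have h' := chain ω a b (i0 - p) (k := p) (k' := i0) (by omega) (by omega) hnc1
    rw [ha0] at h'
    exact h'
  -- b ~ ω q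
  have hnc2 : ∀ m (hm : m + 1 < ℓ), i0 + 1 ≤ m → m < q →
      ¬(ω ⟨m, Nat.lt_of_succ_lt hm⟩ = a ∧ ω ⟨m + 1, hm⟩ = b) := by
    intro m hm hm1 hm2 ⟨hma, hmb⟩
    have := huniq m hm hma hmb
    omega
  have hbq : Relation.ReflTransGen (Rres ω a b) b (ω ⟨q, hq⟩) := by
    have h' := chain ω a b (q - (i0 + 1)) (k := i0 + 1) (k' := q) (by omega) (by omega) hnc2
    rw [hb0] at h'
    exact h'
  rw [hqx] at hbq
  exact hnab ((rstg_symm ω a b hpa).trans (rstg_symm ω a b hbq))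

end CardBridgeAux

lemma CardBridgeAux.split_lt_absurd (ω : Fin ℓ → α) {j j' : ℕ} (hj : j < ℓ) (hs' : DisjointSplit ω j')
    (hlt : j < j') (heq : ω ⟨j, hj⟩ = ω ⟨j', hs'.2.1⟩) : False :=
  Set.disjoint_left.mp hs'.2.2 ⟨⟨j, hj⟩, by simp only [Fin.val_mk]; omega, rfl⟩
    ⟨⟨j', hs'.2.1⟩, by simp only [Fin.val_mk]; omega, heq.symm⟩

/-- The number of bridges of a word-graph equals the number of disjoint splits of the word. -/
theorem card_bridges_eq_card_disjointSplits {ℓ : ℕ} {α : Type*} [Fintype α] (hℓ : 1 ≤ ℓ)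
    (ω : Fin ℓ → α) :
    Nat.card {p : α × α // IsBridge ω p.1 p.2} = Nat.card {j : ℕ // DisjointSplit ω j} := by
  classical
  let f : {j : ℕ // DisjointSplit ω j} → {p : α × α // IsBridge ω p.1 p.2} :=
    fun j => ⟨(ω ⟨j.1 - 1, lt_of_le_of_lt (Nat.sub_le j.1 1) j.2.2.1⟩, ω ⟨j.1, j.2.2.1⟩),
      CardBridgeAux.split_bridge ω j.2⟩
  have hinj : Function.Injective f := by
    rintro ⟨j, hj⟩ ⟨j', hj'⟩ hfe
    simp only [f, Subtype.mk.injEq, Prod.mk.injEq] at hfe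
    apply Subtype.ext
    by_contra hne
    simp only at hne
    rcases lt_or_gt_of_ne hne with h | h
    · exact CardBridgeAux.split_lt_absurd ω hj.2.1 hj' h hfe.2
    · exact CardBridgeAux.split_lt_absurd ω hj'.2.1 hj h hfe.2.symm
  have hsurj : Function.Surjective f := by
    rintro ⟨⟨a, b⟩, hbr⟩
    obtain ⟨j, hs, h1, h2⟩ := CardBridgeAux.bridge_split ω hbr
    exact ⟨⟨j, hs⟩, Subtype.ext (Prod.ext h1 h2)⟩
  exact (Nat.card_eq_of_bijective f ⟨hinj, hsurj⟩).symm
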